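/- Let γ be the standard Gaussian measure on ℝ, a ≥ 1, f_a(t) = e^{at/2}, and N(x) = x² log(1+x²). Then the Luxembourg norm satisfies ‖f_a‖_N ≤ √2 · a · e^{a²/4} (with respect to γ). -/

import Mathlib

open MeasureTheory ProbabilityTheory

noncomputable def luxNorm {α : Type*} [MeasurableSpace α] (μ : Measure α)
    (Φ : ℝ → ℝ) (f : α → ℝ) : ℝ :=
  sInf {l : ℝ | 0 < l ∧ ∫ x, Φ (|f x| / l) ∂μ ≤ 1}

noncomputable def Nfun (x : ℝ) : ℝ := x ^ 2 * Real.log (1 + x ^ 2)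

open Real in
lemma pdf_even (x : ℝ) : gaussianPDFReal 0 1 (-x) = gaussianPDFReal 0 1 x := by
  simp [gaussianPDFReal, neg_sq]

lemma pdf_shift (c x : ℝ) :
    Real.exp (c * x) * gaussianPDFReal 0 1 x
      = Real.exp (c ^ 2 / 2) * gaussianPDFReal c 1 x := by
  simp only [gaussianPDFReal, NNReal.coe_one, mul_one, sub_zero]
  rw [mul_left_comm, ← Real.exp_add, mul_left_comm, ← Real.exp_add]
  congr 2
  ring

lemma integral_gaussianReal_eq (g : ℝ → ℝ) :
    ∫ x, g x ∂(gaussianReal 0 1) = ∫ x, gaussianPDFReal 0 1 x * g x := by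
  rw [gaussianReal_of_var_ne_zero 0 one_ne_zero, gaussianPDF_def]
  have h : (fun x => ENNReal.ofReal (gaussianPDFReal 0 1 x))
      = fun x => ((Real.toNNReal (gaussianPDFReal 0 1 x) : NNReal) : ENNReal) := by
    funext x; simp [ENNReal.ofReal]
  rw [h, integral_withDensity_eq_integral_smul
    ((measurable_gaussianPDFReal 0 1).real_toNNReal)]
  congr 1
  funext x
  rw [NNReal.smul_def, Real.coe_toNNReal _ (gaussianPDFReal_nonneg _ _ _)]
  simp

open Real in
lemma integrable_id_mul_pdf0 :
    Integrable (fun x : ℝ => x * gaussianPDFReal 0 1 x) := by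
  have heq : (fun x : ℝ => x * gaussianPDFReal 0 1 x)
      = fun x => (Real.sqrt (2 * π))⁻¹ * (x * Real.exp (-(1/2) * x ^ 2)) := by
    funext x
    simp only [gaussianPDFReal, NNReal.coe_one, mul_one, sub_zero]
    ring_nf
  rw [heq]
  exact (integrable_mul_exp_neg_mul_sq (by norm_num)).const_mul _

lemma integrable_id_mul_pdf (c : ℝ) :
    Integrable (fun x : ℝ => x * gaussianPDFReal c 1 x) := by
  have h : Integrable (fun y : ℝ => (y + c) * gaussianPDFReal 0 1 y) :=
    integrable_id_mul_pdf0.add ((integrable_gaussianPDFReal 0 1).const_mul c)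
      |>.congr (by filter_upwards with y; simp; ring)
  have := h.comp_sub_right c
  refine this.congr (by filter_upwards with x; simp [gaussianPDFReal_sub, zero_add])

lemma integral_id_mul_pdf (c : ℝ) :
    ∫ x, x * gaussianPDFReal c 1 x = c := by
  have h0 : ∫ x, x * gaussianPDFReal 0 1 x = 0 := by
    have hneg := MeasureTheory.integral_neg_eq_self
      (fun x : ℝ => x * gaussianPDFReal 0 1 x) volume
    simp only [pdf_even, neg_mul] at hneg
    rw [integral_neg] at hneg
    linarith
  calc ∫ x, x * gaussianPDFReal c 1 x
      = ∫ x, ((x - c) + c) * gaussianPDFReal 0 1 (x - c) := by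
        congr 1; funext x; rw [gaussianPDFReal_sub, zero_add]; ring
    _ = ∫ y, (y + c) * gaussianPDFReal 0 1 y :=
        integral_sub_right_eq_self (fun y => (y + c) * gaussianPDFReal 0 1 y) c
    _ = ∫ y, (y * gaussianPDFReal 0 1 y + c * gaussianPDFReal 0 1 y) := by
        congr 1; funext y; ring
    _ = 0 + c * 1 := by
        rw [integral_add integrable_id_mul_pdf0
          ((integrable_gaussianPDFReal 0 1).const_mul c), h0,
          MeasureTheory.integral_const_mul,
          integral_gaussianPDFReal_eq_one 0 one_ne_zero]
    _ = c := by ring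

lemma key_ineq {v : ℝ} (hv : 0 < v) : v * Real.log (1 + v) ≤ 1 + v * Real.log v := by
  have h4 : v * (Real.log (1 + v) - Real.log v) ≤ 1 := by
    rw [← Real.log_div (by positivity) hv.ne']
    calc v * Real.log ((1 + v) / v) ≤ v * ((1 + v) / v - 1) :=
          mul_le_mul_of_nonneg_left (Real.log_le_sub_one_of_pos (by positivity)) hv.le
      _ = 1 := by field_simp; ring
  nlinarith [h4]

/-- For f_a(t)=e^{at/2} and the standard Gaussian, ‖f_a‖_N ≤ √2·a·e^{a²/4}. -/
theorem luxNorm_N_exponential (a : ℝ) (ha : 1 ≤ a) :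
    luxNorm (gaussianReal 0 1) Nfun (fun t => Real.exp (a * t / 2))
      ≤ Real.sqrt 2 * a * Real.exp (a ^ 2 / 4) := by
  have ha0 : 0 < a := lt_of_lt_of_le one_pos ha
  set L : ℝ := Real.sqrt 2 * a * Real.exp (a ^ 2 / 4) with hL_def
  set B : ℝ := a ^ 2 * Real.exp (a ^ 2 / 2) with hB_def
  have hB : 0 < B := by positivity
  have hL : 0 < L := by
    have : (0:ℝ) < Real.sqrt 2 := Real.sqrt_pos.mpr (by norm_num)
    positivity
  have hL2 : L ^ 2 = 2 * B := by
    have hs : (Real.sqrt 2) ^ 2 = 2 := Real.sq_sqrt (by norm_num)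
    have he : Real.exp (a ^ 2 / 4) * Real.exp (a ^ 2 / 4) = Real.exp (a ^ 2 / 2) := by
      rw [← Real.exp_add]; ring_nf
    calc L ^ 2 = (Real.sqrt 2) ^ 2 * a ^ 2 * (Real.exp (a ^ 2 / 4) * Real.exp (a ^ 2 / 4)) := by
          ring
      _ = 2 * B := by rw [hs, he, hB_def]; ring
  set g : ℝ → ℝ := fun t => 1/2 + (2 * B)⁻¹ * (Real.exp (a * t) * (a * t - Real.log B))
    with hg_def
  -- pointwise bound
  have hpt : ∀ t, Nfun (|Real.exp (a * t / 2)| / L) ≤ g t := by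
    intro t
    set v : ℝ := Real.exp (a * t) / B with hv_def
    have hv : 0 < v := by positivity
    have habs : |Real.exp (a * t / 2)| = Real.exp (a * t / 2) := abs_of_pos (Real.exp_pos _)
    have hx2 : (Real.exp (a * t / 2) / L) ^ 2 = v / 2 := by
      rw [div_pow, hL2]
      have hsq : Real.exp (a * t / 2) ^ 2 = Real.exp (a * t) := by
        rw [sq, ← Real.exp_add]; ring_nf
      rw [hsq, hv_def]
      field_simp
    have hlogv : Real.log v = a * t - Real.log B := by
      rw [hv_def, Real.log_div (Real.exp_ne_zero _) hB.ne', Real.log_exp]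
    have hexp : Real.exp (a * t) = v * B := by
      rw [hv_def]; field_simp
    have hRHS : g t = 1/2 + (v * Real.log v) / 2 := by
      rw [hg_def]
      simp only
      rw [hexp, ← hlogv, mul_inv]
      rw [show (2:ℝ)⁻¹ * B⁻¹ * (v * B * Real.log v) = v * Real.log v * (B * B⁻¹) / 2 from by ring,
        mul_inv_cancel₀ hB.ne']
      ring
    rw [hRHS]
    show Nfun (|Real.exp (a * t / 2)| / L) ≤ _
    unfold Nfun
    rw [habs, hx2]
    have step1 : v / 2 * Real.log (1 + v / 2) ≤ v / 2 * Real.log (1 + v) := by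
      apply mul_le_mul_of_nonneg_left _ (by positivity)
      exact Real.log_le_log (by positivity) (by linarith)
    have step2 := key_ineq hv
    linarith
  -- integral bound
  have hNnonneg : ∀ t, 0 ≤ Nfun (|Real.exp (a * t / 2)| / L) := by
    intro t
    unfold Nfun
    apply mul_nonneg (sq_nonneg _)
    apply Real.log_nonneg
    nlinarith [sq_nonneg (|Real.exp (a * t / 2)| / L)]
  set d : ℝ := (2 * B)⁻¹ * Real.exp (a ^ 2 / 2) * a with hd_def
  set e : ℝ := (2 * B)⁻¹ * Real.exp (a ^ 2 / 2) * (-Real.log B) with he_def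
  have hdecomp : ∀ x, gaussianPDFReal 0 1 x * g x
      = (1/2) * gaussianPDFReal 0 1 x + (d * x + e) * gaussianPDFReal a 1 x := by
    intro x
    have hs := pdf_shift a x
    calc gaussianPDFReal 0 1 x * g x
        = (1/2) * gaussianPDFReal 0 1 x
          + (2 * B)⁻¹ * ((Real.exp (a * x) * gaussianPDFReal 0 1 x) * (a * x - Real.log B)) := by
          rw [hg_def]; ring
      _ = _ := by rw [hs, hd_def, he_def]; ring
  have hint3 : Integrable (fun x : ℝ => (d * x + e) * gaussianPDFReal a 1 x) volume := by
    refine (((integrable_id_mul_pdf a).const_mul d).add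
      ((integrable_gaussianPDFReal a 1).const_mul e)).congr ?_
    filter_upwards with x
    simp only [Pi.add_apply]
    ring
  have hint2 : Integrable (fun x : ℝ =>
      (1/2) * gaussianPDFReal 0 1 x + (d * x + e) * gaussianPDFReal a 1 x) volume :=
    ((integrable_gaussianPDFReal 0 1).const_mul _).add hint3
  have key : ∫ x, Nfun (|Real.exp (a * x / 2)| / L) ∂(gaussianReal 0 1) ≤ 1 := by
    rw [integral_gaussianReal_eq]
    have hmono : ∫ x, gaussianPDFReal 0 1 x * Nfun (|Real.exp (a * x / 2)| / L)
        ≤ ∫ x, gaussianPDFReal 0 1 x * g x := by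
      apply integral_mono_of_nonneg
      · filter_upwards with x
        exact mul_nonneg (gaussianPDFReal_nonneg _ _ _) (hNnonneg x)
      · exact hint2.congr (by filter_upwards with x; rw [hdecomp x])
      · filter_upwards with x
        exact mul_le_mul_of_nonneg_left (hpt x) (gaussianPDFReal_nonneg _ _ _)
    have hval : ∫ x, gaussianPDFReal 0 1 x * g x = 1/2 + (d * a + e) := by
      rw [show (fun x => gaussianPDFReal 0 1 x * g x)
          = fun x => (1/2) * gaussianPDFReal 0 1 x + (d * x + e) * gaussianPDFReal a 1 x
          from funext hdecomp]
      rw [integral_add ((integrable_gaussianPDFReal 0 1).const_mul _) hint3]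
      rw [MeasureTheory.integral_const_mul, integral_gaussianPDFReal_eq_one 0 one_ne_zero]
      have : ∫ x, (d * x + e) * gaussianPDFReal a 1 x = d * a + e := by
        rw [show (fun x => (d * x + e) * gaussianPDFReal a 1 x)
            = fun x => d * (x * gaussianPDFReal a 1 x) + e * gaussianPDFReal a 1 x
            from funext fun x => by ring]
        rw [integral_add ((integrable_id_mul_pdf a).const_mul d)
          ((integrable_gaussianPDFReal a 1).const_mul e),
          MeasureTheory.integral_const_mul, MeasureTheory.integral_const_mul,
          integral_id_mul_pdf, integral_gaussianPDFReal_eq_one a one_ne_zero]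
        ring
      rw [this]
      ring
    have hda : d * a = 1/2 := by
      rw [hd_def, hB_def]
      have h1 : a ≠ 0 := ha0.ne'
      have h2 : Real.exp (a ^ 2 / 2) ≠ 0 := Real.exp_ne_zero _
      field_simp
    have hBe : 1 ≤ B := by
      rw [hB_def]
      have h1 : (1:ℝ) ≤ a ^ 2 := by nlinarith
      have h2 : (1:ℝ) ≤ Real.exp (a ^ 2 / 2) := by
        rw [show (1:ℝ) = Real.exp 0 from (Real.exp_zero).symm]
        exact Real.exp_le_exp.mpr (by positivity)
      nlinarith
    have he0 : e ≤ 0 := by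
      rw [he_def]
      have hlog : 0 ≤ Real.log B := Real.log_nonneg hBe
      have : 0 ≤ (2 * B)⁻¹ * Real.exp (a ^ 2 / 2) := by positivity
      nlinarith
    calc ∫ x, gaussianPDFReal 0 1 x * Nfun (|Real.exp (a * x / 2)| / L)
        ≤ 1/2 + (d * a + e) := hmono.trans_eq hval
      _ ≤ 1 := by rw [hda]; linarith
  unfold luxNorm
  apply csInf_le ⟨0, fun l hl => hl.1.le⟩
  exact ⟨hL, key⟩
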